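/- Suppose for each element S_x 𝟙 = S_y 𝟙 = 0 and the numerical flux p* multiplied by the signed normal component takes equal and opposite values on the two sides of each interior mortar. Then the velocity updates M_J dv_x/dt - S_xᵀ p = -Σ_g (L^g)ᵀ n_x^{-g} S_J^g W^g p* and the analogous y-equation conserve total velocity mass: Σ_e 𝟙ᵀ M_J dv_x/dt = 0 and Σ_e 𝟙ᵀ M_J dv_y/dt = 0 with periodic boundary conditions, without any assumption on the metric-term divergence theorem. -/

import Mathlib

open Matrix

theorem velocity_mass_conservation_aux
    {E G : Type*} [Fintype E] [DecidableEq G]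
    (d : E → ℕ) (q : G → ℕ)
    (Ge : E → Finset G)
    (em ep : G → E)
    (MJ S : ∀ e : E, Matrix (Fin (d e)) (Fin (d e)) ℝ)
    (p dvdt : ∀ e : E, Fin (d e) → ℝ)
    (SJW : ∀ g : G, Matrix (Fin (q g)) (Fin (q g)) ℝ)
    (Lg : ∀ (e : E) (g : G), Matrix (Fin (q g)) (Fin (d e)) ℝ)
    (n : ∀ (e : E) (g : G), Fin (q g) → ℝ)
    (pstar : ∀ g : G, Fin (q g) → ℝ)
    (hmem : ∀ g, g ∈ Ge (em g) ∧ g ∈ Ge (ep g) ∧ em g ≠ ep g)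
    (hsides : ∀ e g, g ∈ Ge e → e = em g ∨ e = ep g)
    (hL1 : ∀ e g, Lg e g *ᵥ (fun _ => (1 : ℝ)) = fun _ => 1)
    (hS1 : ∀ e, S e *ᵥ (fun _ => (1 : ℝ)) = 0)
    (hopp : ∀ g, n (em g) g = -(n (ep g) g))
    (hscheme : ∀ e, MJ e *ᵥ dvdt e - (S e)ᵀ *ᵥ p e
      = -∑ g ∈ Ge e, (Lg e g)ᵀ *ᵥ (fun i => n e g i * (SJW g *ᵥ pstar g) i)) :
    ∑ e, (fun _ => (1 : ℝ)) ⬝ᵥ (MJ e *ᵥ dvdt e) = 0 := by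
  classical
  set F : (e : E) → (g : G) → ℝ :=
    fun e g => ∑ i, n e g i * (SJW g *ᵥ pstar g) i with hF
  have h1 : ∀ e, (fun _ => (1 : ℝ)) ⬝ᵥ (MJ e *ᵥ dvdt e) = -∑ g ∈ Ge e, F e g := by
    intro e
    have h := congrArg (fun v => (fun _ => (1 : ℝ)) ⬝ᵥ v) (hscheme e)
    simp only [dotProduct_sub, dotProduct_neg, dotProduct_mulVec, vecMul_transpose,
      hS1, hL1, zero_dotProduct, sub_zero] at h
    rw [dotProduct_mulVec, h]
    congr 1
    simp only [dotProduct, Finset.sum_apply, one_mul]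
    rw [Finset.sum_comm]
    refine Finset.sum_congr rfl fun g _ => ?_
    have : ∑ x, ((Lg e g)ᵀ *ᵥ fun i => n e g i * (SJW g *ᵥ pstar g) i) x = (fun _ => (1:ℝ)) ⬝ᵥ ((Lg e g)ᵀ *ᵥ fun i => n e g i * (SJW g *ᵥ pstar g) i) := by simp [dotProduct]
    rw [this]
    rw [dotProduct_mulVec, vecMul_transpose, hL1]
    simp [hF, dotProduct]
  rw [Finset.sum_congr rfl fun e _ => h1 e]
  rw [Finset.sum_neg_distrib, neg_eq_zero]
  set U : Finset G := Finset.univ.biUnion Ge with hU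
  have hsub : ∀ e : E, Ge e ⊆ U := fun e =>
    Finset.subset_biUnion_of_mem Ge (Finset.mem_univ e)
  have h2 : ∀ e : E, ∑ g ∈ Ge e, F e g = ∑ g ∈ U, if g ∈ Ge e then F e g else 0 := by
    intro e
    rw [Finset.sum_ite_mem, Finset.inter_eq_right.mpr (hsub e)]
  rw [Finset.sum_congr rfl fun e _ => h2 e, Finset.sum_comm]
  refine Finset.sum_eq_zero fun g _ => ?_
  have hfilter : (Finset.univ.filter (fun e => g ∈ Ge e)) = {em g, ep g} := by
    ext e
    simp only [Finset.mem_filter, Finset.mem_univ, true_and, Finset.mem_insert,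
      Finset.mem_singleton]
    constructor
    · exact fun h => hsides e g h
    · rintro (rfl | rfl)
      · exact (hmem g).1
      · exact (hmem g).2.1
  rw [← Finset.sum_filter, hfilter, Finset.sum_pair (hmem g).2.2]
  have : F (em g) g = -F (ep g) g := by
    simp only [hF, hopp g, Pi.neg_apply, neg_mul, Finset.sum_neg_distrib]
  rw [this, neg_add_cancel]


/-- Conservation of the velocity components: if each element's stiffness matrices annihilate
constants (`S_x 𝟙 = S_y 𝟙 = 0`), the mortar interpolation maps constants to constants, the
normal components are equal and opposite on the two sides of each (interior) mortar, and the
numerical flux `p*` is single valued on each mortar, then the semidiscrete velocity updates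
satisfy `Σ_e 𝟙ᵀ M_J dv_x/dt = 0` and `Σ_e 𝟙ᵀ M_J dv_y/dt = 0` with periodic boundary
conditions, without any assumption on the metric-term divergence theorem. -/
theorem velocity_mass_conservation
    {E G : Type*} [Fintype E] [DecidableEq G]
    (d : E → ℕ) (q : G → ℕ)
    (Ge : E → Finset G)
    (em ep : G → E)
    (MJ Sx Sy : ∀ e : E, Matrix (Fin (d e)) (Fin (d e)) ℝ)
    (p dvxdt dvydt : ∀ e : E, Fin (d e) → ℝ)
    (SJW : ∀ g : G, Matrix (Fin (q g)) (Fin (q g)) ℝ)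
    (Lg : ∀ (e : E) (g : G), Matrix (Fin (q g)) (Fin (d e)) ℝ)
    (nx ny : ∀ (e : E) (g : G), Fin (q g) → ℝ)
    (pstar : ∀ g : G, Fin (q g) → ℝ)
    (hmem : ∀ g, g ∈ Ge (em g) ∧ g ∈ Ge (ep g) ∧ em g ≠ ep g)
    (hsides : ∀ e g, g ∈ Ge e → e = em g ∨ e = ep g)
    (hL1 : ∀ e g, Lg e g *ᵥ (fun _ => (1 : ℝ)) = fun _ => 1)
    (hSx1 : ∀ e, Sx e *ᵥ (fun _ => (1 : ℝ)) = 0)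
    (hSy1 : ∀ e, Sy e *ᵥ (fun _ => (1 : ℝ)) = 0)
    (hoppx : ∀ g, nx (em g) g = -(nx (ep g) g))
    (hoppy : ∀ g, ny (em g) g = -(ny (ep g) g))
    (hschemex : ∀ e, MJ e *ᵥ dvxdt e - (Sx e)ᵀ *ᵥ p e
      = -∑ g ∈ Ge e, (Lg e g)ᵀ *ᵥ (fun i => nx e g i * (SJW g *ᵥ pstar g) i))
    (hschemey : ∀ e, MJ e *ᵥ dvydt e - (Sy e)ᵀ *ᵥ p e
      = -∑ g ∈ Ge e, (Lg e g)ᵀ *ᵥ (fun i => ny e g i * (SJW g *ᵥ pstar g) i)) :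
    (∑ e, (fun _ => (1 : ℝ)) ⬝ᵥ (MJ e *ᵥ dvxdt e) = 0) ∧
    (∑ e, (fun _ => (1 : ℝ)) ⬝ᵥ (MJ e *ᵥ dvydt e) = 0) := by
  constructor
  · exact velocity_mass_conservation_aux d q Ge em ep MJ Sx p dvxdt SJW Lg nx pstar
      hmem hsides hL1 hSx1 hoppx hschemex
  · exact velocity_mass_conservation_aux d q Ge em ep MJ Sy p dvydt SJW Lg ny pstar
      hmem hsides hL1 hSy1 hoppy hschemey
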